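/- For any centrally-symmetric convex body K ⊆ ℝⁿ of volume 1 and any even Borel measurable probability density f on K, and any p ≥ 1, there exists a unit vector ξ with ∫_K |⟨x,ξ⟩|^p f(x) dx ≤ (C √(pn))^p, where C is an absolute constant. Equivalently, γ(p,n) ≤ C√(pn) where γ(p,n) is the smallest γ such that min_{ξ∈S^{n-1}} ∫_K |⟨x,ξ⟩|^p f dx ≤ γ^p |K|^{p/n} ∫_K f dx for all symmetric convex bodies K and all even nonnegative f on K. -/

import Mathlib

open MeasureTheory Metric
open scoped RealInnerProductSpace ENNReal

/-- There is an absolute constant `C > 0` such that for any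
centrally-symmetric convex body `K ⊆ ℝⁿ` of volume 1, any even Borel measurable
probability density `f` on `K`, and any `p ≥ 1`, there exists a unit vector `ξ` with
`∫_K |⟨x,ξ⟩|^p f(x) dx ≤ (C √(pn))^p`. -/
theorem gamma_upper_bound :
    ∃ C > (0 : ℝ), ∀ n : ℕ, 1 ≤ n → ∀ p : ℝ, 1 ≤ p →
      ∀ K : Set (EuclideanSpace ℝ (Fin n)),
        Convex ℝ K → IsCompact K → K = -K → (interior K).Nonempty →
        volume K = 1 →
      ∀ f : EuclideanSpace ℝ (Fin n) → ℝ,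
        Measurable f → (∀ x, 0 ≤ f x) → (∀ x, f (-x) = f x) →
        (∫ x in K, f x) = 1 →
        ∃ ξ : EuclideanSpace ℝ (Fin n), ‖ξ‖ = 1 ∧
          ∫ x in K, |⟪x, ξ⟫| ^ p * f x ≤ (C * Real.sqrt (p * n)) ^ p := by
  refine ⟨2, by norm_num, ?_⟩
  intro n hn p hp K hKconv hKcomp hKsymm hKint hKvol f hfmeas hfnn hfeven hfint
  have hp0 : (0:ℝ) ≤ p := le_trans zero_le_one hp
  set B : ℝ := 2 * Real.sqrt n with hBdef
  have hBnn : 0 ≤ B := by positivity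
  have hKmeas : MeasurableSet K := hKcomp.measurableSet
  by_cases h : ∃ ξ : EuclideanSpace ℝ (Fin n), ‖ξ‖ = 1 ∧ ∀ x ∈ K, |⟪x, ξ⟫| ≤ B
  · obtain ⟨ξ, hξ, hbound⟩ := h
    refine ⟨ξ, hξ, ?_⟩
    have hfInt : IntegrableOn f K := by
      by_contra hc
      rw [integral_undef hc] at hfint
      norm_num at hfint
    have hmeasg : Measurable fun x : EuclideanSpace ℝ (Fin n) => |⟪x, ξ⟫| ^ p * f x := by
      have h1 : Measurable fun x : EuclideanSpace ℝ (Fin n) => ⟪x, ξ⟫ :=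
        (continuous_id.inner continuous_const).measurable
      exact ((h1.abs.pow_const p)).mul hfmeas
    have hIg : IntegrableOn (fun x => |⟪x, ξ⟫| ^ p * f x) K := by
      refine Integrable.mono' (hfInt.const_mul (B ^ p)) hmeasg.aestronglyMeasurable ?_
      filter_upwards [ae_restrict_mem hKmeas] with x hx
      rw [Real.norm_eq_abs, abs_of_nonneg (mul_nonneg (Real.rpow_nonneg (abs_nonneg _) p) (hfnn x))]
      have : |⟪x, ξ⟫| ^ p ≤ B ^ p :=
        Real.rpow_le_rpow (abs_nonneg _) (hbound x hx) hp0
      exact mul_le_mul_of_nonneg_right this (hfnn x)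
    have h1 : ∫ x in K, |⟪x, ξ⟫| ^ p * f x ≤ ∫ x in K, B ^ p * f x := by
      refine setIntegral_mono_on hIg (hfInt.const_mul _) hKmeas ?_
      intro x hx
      exact mul_le_mul_of_nonneg_right
        (Real.rpow_le_rpow (abs_nonneg _) (hbound x hx) hp0) (hfnn x)
    have h2 : ∫ x in K, B ^ p * f x = B ^ p := by
      rw [integral_const_mul, hfint, mul_one]
    have h3 : B ^ p ≤ (2 * Real.sqrt (p * n)) ^ p := by
      apply Real.rpow_le_rpow hBnn ?_ hp0
      have : Real.sqrt n ≤ Real.sqrt (p * n) := by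
        apply Real.sqrt_le_sqrt
        nlinarith [Nat.cast_nonneg (α := ℝ) n]
      linarith
    calc ∫ x in K, |⟪x, ξ⟫| ^ p * f x ≤ B ^ p := h2 ▸ h1
      _ ≤ (2 * Real.sqrt (p * n)) ^ p := h3
  · exfalso
    push_neg at h
    -- every point of the closed ball of radius B lies in K
    have hsub : closedBall (0 : EuclideanSpace ℝ (Fin n)) B ⊆ K := by
      intro y hy
      by_contra hyK
      obtain ⟨g, u, hgK, hgy⟩ := geometric_hahn_banach_closed_point hKconv hKcomp.isClosed hyK
      set ξ₀ : EuclideanSpace ℝ (Fin n) :=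
        (InnerProductSpace.toDual ℝ (EuclideanSpace ℝ (Fin n))).symm g with hξ₀
      have hrep : ∀ z : EuclideanSpace ℝ (Fin n), g z = ⟪z, ξ₀⟫ := by
        intro z
        rw [real_inner_comm]
        exact (InnerProductSpace.toDual_symm_apply).symm
      obtain ⟨a, ha⟩ := hKint
      have haK : a ∈ K := interior_subset ha
      have hξ₀ne : ξ₀ ≠ 0 := by
        intro h0
        have h1 := hgK a haK
        have h2 : g a = 0 := by rw [hrep, h0, inner_zero_right]
        have h3 : g y = 0 := by rw [hrep, h0, inner_zero_right]
        linarith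
      have hξ₀pos : 0 < ‖ξ₀‖ := norm_pos_iff.mpr hξ₀ne
      set ξ : EuclideanSpace ℝ (Fin n) := ‖ξ₀‖⁻¹ • ξ₀ with hξdef
      have hξnorm : ‖ξ‖ = 1 := by
        rw [hξdef, norm_smul, norm_inv, norm_norm, inv_mul_cancel₀ hξ₀pos.ne']
      obtain ⟨x, hxK, hxB⟩ := h ξ hξnorm
      -- replace x by ±x so that the inner product is positive
      obtain ⟨x', hx'K, hx'⟩ : ∃ x' ∈ K, B < ⟪x', ξ⟫ := by
        rcases abs_cases (⟪x, ξ⟫ : ℝ) with ⟨he, _⟩ | ⟨he, _⟩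
        · exact ⟨x, hxK, by rw [← he]; exact hxB⟩
        · refine ⟨-x, ?_, ?_⟩
          · rw [hKsymm]; exact Set.neg_mem_neg.mpr hxK
          · rw [inner_neg_left, ← he]; exact hxB
      have hinner : ⟪x', ξ₀⟫ = ‖ξ₀‖ * ⟪x', ξ⟫ := by
        rw [hξdef, real_inner_smul_right]
        field_simp
      have h1 : g x' < u := hgK x' hx'K
      have h2 : u < g y := hgy
      have h3 : g y ≤ ‖y‖ * ‖ξ₀‖ := by
        rw [hrep]; exact real_inner_le_norm y ξ₀
      have h4 : ‖y‖ ≤ B := mem_closedBall_zero_iff.mp hy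
      have h5 : B * ‖ξ₀‖ < g x' := by
        rw [hrep, hinner]
        have := mul_lt_mul_of_pos_left hx' hξ₀pos
        linarith [this]
      nlinarith [hξ₀pos]
    -- but then the volume of K is too big
    have hcube : (MeasurableEquiv.toLp 2 (Fin n → ℝ)).symm ⁻¹'
        (Set.pi Set.univ fun _ : Fin n => Set.Icc (-2:ℝ) 2) ⊆
        closedBall (0 : EuclideanSpace ℝ (Fin n)) B := by
      intro x hx
      simp only [Set.mem_preimage, Set.mem_pi, Set.mem_univ, forall_true_left,
        Set.mem_Icc] at hx
      rw [mem_closedBall_zero_iff]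
      have hx' : ∀ i, |x i| ≤ 2 := by
        intro i
        rcases hx i with hi
        exact abs_le.mpr ⟨hi.1, hi.2⟩
      have : ‖x‖ = Real.sqrt (∑ i, x i ^ 2) := by
        rw [EuclideanSpace.norm_eq]
        congr 1
        apply Finset.sum_congr rfl
        intro i _
        rw [Real.norm_eq_abs, sq_abs]
      rw [this, hBdef]
      have hsum : (∑ i, x i ^ 2) ≤ (4 : ℝ) * n := by
        calc (∑ i, x i ^ 2) ≤ ∑ _i : Fin n, (4:ℝ) := by
              apply Finset.sum_le_sum
              intro i _
              nlinarith [hx' i, abs_nonneg (x i), sq_abs (x i)]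
          _ = (4:ℝ) * n := by simp [mul_comm]
      calc Real.sqrt (∑ i, x i ^ 2) ≤ Real.sqrt ((4:ℝ) * n) := Real.sqrt_le_sqrt hsum
        _ = 2 * Real.sqrt n := by
            rw [Real.sqrt_mul (by norm_num), show (4:ℝ) = 2^2 by norm_num,
              Real.sqrt_sq (by norm_num)]
    have hvol1 : volume ((MeasurableEquiv.toLp 2 (Fin n → ℝ)).symm ⁻¹'
        (Set.pi Set.univ fun _ : Fin n => Set.Icc (-2:ℝ) 2))
        = (ENNReal.ofReal 4) ^ n := by
      rw [(EuclideanSpace.volume_preserving_symm_measurableEquiv_toLp (Fin n)).measure_preimage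
        ((MeasurableSet.pi Set.countable_univ fun i _ => measurableSet_Icc).nullMeasurableSet)]
      rw [volume_pi_pi]
      simp [Real.volume_Icc]
      norm_num
    have hle : (ENNReal.ofReal 4) ^ n ≤ 1 := by
      rw [← hvol1, ← hKvol]
      exact measure_mono (le_trans hcube hsub)
    have : (1:ℝ≥0∞) < (ENNReal.ofReal 4) ^ n := by
      calc (1:ℝ≥0∞) < ENNReal.ofReal 4 := by
            rw [show (1:ℝ≥0∞) = ENNReal.ofReal 1 by simp]
            exact (ENNReal.ofReal_lt_ofReal_iff (by norm_num)).mpr (by norm_num)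
        _ = (ENNReal.ofReal 4) ^ 1 := (pow_one _).symm
        _ ≤ (ENNReal.ofReal 4) ^ n := by
            apply pow_le_pow_right₀ ?_ hn
            rw [show (1:ℝ≥0∞) = ENNReal.ofReal 1 by simp]
            exact (ENNReal.ofReal_le_ofReal_iff (by norm_num)).mpr (by norm_num)
    exact absurd hle (not_le.mpr this)
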